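/- Let ℓ ≥ 1 be an integer, a = (a_0, …, a_ℓ) ∈ ℝ^{ℓ+1}, and let q̂_a be the unique polynomial of degree at most ℓ with q̂_a(i) = a_i for i = 0, …, ℓ. Then for every integer s with 0 ≤ s ≤ ℓ, ((-1)^{ℓ-s} · ℓ!/(ℓ-s)!) · q̂_a^{(ℓ-s)}(0) = ∑_{k=0}^{s} (-1)^k · τ_{ℓ,s-k,0} · (∑_{j=0}^{ℓ} (-1)^j · C(ℓ,j) · j^k · a_j), where τ_{ℓ,m,0} is the m-th elementary symmetric polynomial in 1, …, ℓ (with τ_{ℓ,0,0} = 1). -/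

import Mathlib

open Polynomial Finset

/-- `τ_{ℓ,m,0}`: the `m`-th elementary symmetric polynomial in `1, 2, …, ℓ`
(with `τ_{ℓ,0,0} = 1`). -/
def tau (ℓ m : ℕ) : ℝ :=
  ∑ S ∈ (Finset.Icc 1 ℓ).powersetCard m, ∏ i ∈ S, (i : ℝ)


lemma alt_sum_eval_eq_zero (ℓ : ℕ) (f : Polynomial ℝ) (hf : f.degree < (ℓ : ℕ)) :
    ∑ j ∈ Finset.range (ℓ + 1), (-1 : ℝ) ^ j * (ℓ.choose j : ℝ) * f.eval (j:ℝ) = 0 := by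
  induction ℓ generalizing f with
  | zero =>
    have : f = 0 := by
      rw [← Polynomial.degree_eq_bot]
      simpa using hf
    simp [this]
  | succ n ih =>
    set g : Polynomial ℝ := f.comp (X + C 1) - f with hg
    have hgev : ∀ j : ℕ, g.eval (j:ℝ) = f.eval ((j : ℝ) + 1) - f.eval (j:ℝ) := by
      intro j; simp [hg]
    have key : ∑ j ∈ Finset.range (n + 2), (-1 : ℝ) ^ j * ((n+1).choose j : ℝ) * f.eval (j:ℝ)
        = - ∑ j ∈ Finset.range (n + 1), (-1 : ℝ) ^ j * (n.choose j : ℝ) * g.eval (j:ℝ) := by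
      rw [Finset.sum_range_succ' (fun j => (-1 : ℝ) ^ j * ((n+1).choose j : ℝ) * f.eval (j:ℝ))]
      have hpascal : ∀ j : ℕ, (((n+1).choose (j+1) : ℝ)) = (n.choose j : ℝ) + (n.choose (j+1) : ℝ) := by
        intro j; rw [Nat.choose_succ_succ]; push_cast; ring
      simp only [hpascal]
      have h1 : ∑ j ∈ Finset.range (n + 1),
            (-1 : ℝ) ^ (j+1) * ((n.choose j : ℝ) + (n.choose (j+1) : ℝ)) * f.eval ((j:ℝ)+1)
          = (∑ j ∈ Finset.range (n + 1), (-1 : ℝ) ^ (j+1) * (n.choose j : ℝ) * f.eval ((j:ℝ)+1))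
            + ∑ j ∈ Finset.range (n + 1), (-1 : ℝ) ^ (j+1) * (n.choose (j+1) : ℝ) * f.eval ((j:ℝ)+1) := by
        rw [← Finset.sum_add_distrib]
        apply Finset.sum_congr rfl; intro j _; push_cast; ring
      push_cast at h1 ⊢
      rw [h1]
      have h2 : ∑ j ∈ Finset.range (n + 1), (-1 : ℝ) ^ (j+1) * (n.choose (j+1) : ℝ) * f.eval ((j:ℝ)+1)
          = (∑ j ∈ Finset.range (n + 2), (-1 : ℝ) ^ j * (n.choose j : ℝ) * f.eval (j:ℝ))
            - (-1 : ℝ) ^ 0 * (n.choose 0 : ℝ) * f.eval ((0:ℕ):ℝ) := by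
        rw [Finset.sum_range_succ' (fun j => (-1 : ℝ) ^ j * (n.choose j : ℝ) * f.eval (j:ℝ))]
        push_cast; ring
      rw [h2]
      have h3 : ∑ j ∈ Finset.range (n + 2), (-1 : ℝ) ^ j * (n.choose j : ℝ) * f.eval (j:ℝ)
          = ∑ j ∈ Finset.range (n + 1), (-1 : ℝ) ^ j * (n.choose j : ℝ) * f.eval (j:ℝ) := by
        rw [Finset.sum_range_succ]
        simp [Nat.choose_succ_self]
      rw [h3]
      have h5 : -∑ j ∈ Finset.range (n + 1), (-1 : ℝ) ^ j * (n.choose j : ℝ) * g.eval (j:ℝ)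
          = ∑ j ∈ Finset.range (n + 1), ((-1 : ℝ) ^ (j+1) * (n.choose j : ℝ) * f.eval ((j:ℝ)+1)
              + (-1 : ℝ) ^ j * (n.choose j : ℝ) * f.eval (j:ℝ)) := by
        rw [← Finset.sum_neg_distrib]
        apply Finset.sum_congr rfl
        intro j _
        rw [hgev j]
        ring
      rw [h5, Finset.sum_add_distrib]
      simp only [Nat.choose_zero_right, Nat.cast_one]
      push_cast
      ring
    rw [key]
    rcases eq_or_ne g 0 with h0 | h0
    · simp [h0]
    · rw [ih g ?_, neg_zero]
      have hf0 : f ≠ 0 := by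
        intro h; apply h0; simp [hg, h]
      have hfc : f.natDegree ≠ 0 → g.degree < f.degree := by
        intro hnd
        rw [hg]
        have htay : f.comp (X + C 1) = Polynomial.taylor 1 f := (Polynomial.taylor_apply 1 f).symm
        have hc0 : f.comp (X + C 1) ≠ 0 := by
          rw [htay]
          intro h
          apply hf0
          have := Polynomial.taylor_injective (1:ℝ) (a₁ := f) (a₂ := 0)
          simp only [map_zero] at this
          exact this h
        have hdeq : (f.comp (X + C 1)).degree = f.degree := by
          rw [Polynomial.degree_eq_natDegree hc0, Polynomial.degree_eq_natDegree hf0, htay,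
            Polynomial.natDegree_taylor]
        have hX : ((X + C 1 : Polynomial ℝ)).natDegree ≠ 0 := by
          rw [Polynomial.natDegree_X_add_C]; exact one_ne_zero
        have hlc : (f.comp (X + C 1)).leadingCoeff = f.leadingCoeff := by
          rw [Polynomial.leadingCoeff_comp hX, Polynomial.leadingCoeff_X_add_C, one_pow, mul_one]
        calc (f.comp (X + C 1) - f).degree < (f.comp (X + C 1)).degree :=
              Polynomial.degree_sub_lt hdeq hc0 hlc
          _ = f.degree := hdeq
      rcases eq_or_ne f.natDegree 0 with hnd | hnd
      · exfalso
        obtain ⟨c, rfl⟩ := Polynomial.natDegree_eq_zero.mp hnd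
        apply h0; simp [hg]
      · have h1 : g.degree < f.degree := hfc hnd
        have h2 : f.natDegree < n + 1 := by
          rwa [Polynomial.natDegree_lt_iff_degree_lt hf0]
        calc g.degree < f.degree := h1
          _ = (f.natDegree : WithBot ℕ) := (Polynomial.degree_eq_natDegree hf0)
          _ ≤ (n : WithBot ℕ) := by exact_mod_cast Nat.lt_succ_iff.mp h2



lemma prod_eq_sum_tau (ℓ : ℕ) (x : ℝ) :
    ∏ i ∈ Finset.Icc 1 ℓ, ((i : ℝ) - x)
      = ∑ m ∈ Finset.range (ℓ + 1), (-1 : ℝ) ^ m * tau ℓ (ℓ - m) * x ^ m := by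
  have hcard : (Finset.Icc 1 ℓ).card = ℓ := by
    rw [Nat.card_Icc]; omega
  calc ∏ i ∈ Finset.Icc 1 ℓ, ((i : ℝ) - x)
      = ∏ i ∈ Finset.Icc 1 ℓ, ((i : ℝ) + (-x)) := by simp [sub_eq_add_neg]
    _ = ∑ t ∈ (Finset.Icc 1 ℓ).powerset,
          (∏ i ∈ t, (i : ℝ)) * ∏ _i ∈ Finset.Icc 1 ℓ \ t, (-x) :=
        Finset.prod_add _ _ _
    _ = ∑ t ∈ (Finset.Icc 1 ℓ).powerset, (∏ i ∈ t, (i : ℝ)) * (-x) ^ (ℓ - t.card) := by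
        apply Finset.sum_congr rfl
        intro t ht
        rw [Finset.prod_const, Finset.card_sdiff_of_subset (Finset.mem_powerset.mp ht), hcard]
    _ = ∑ c ∈ Finset.range (ℓ + 1),
          ∑ t ∈ (Finset.Icc 1 ℓ).powersetCard c, (∏ i ∈ t, (i : ℝ)) * (-x) ^ (ℓ - t.card) := by
        rw [Finset.sum_powerset, hcard]
    _ = ∑ c ∈ Finset.range (ℓ + 1), tau ℓ c * (-x) ^ (ℓ - c) := by
        apply Finset.sum_congr rfl
        intro c _
        rw [tau, Finset.sum_mul]
        apply Finset.sum_congr rfl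
        intro t ht
        rw [(Finset.mem_powersetCard.mp ht).2]
    _ = ∑ m ∈ Finset.range (ℓ + 1), (-1 : ℝ) ^ m * tau ℓ (ℓ - m) * x ^ m := by
        rw [← Finset.sum_range_reflect]
        apply Finset.sum_congr rfl
        intro m hm
        have hm' : m ≤ ℓ := Nat.lt_succ_iff.mp (Finset.mem_range.mp hm)
        have h1 : ℓ + 1 - 1 - m = ℓ - m := by omega
        have h2 : ℓ - (ℓ - m) = m := by omega
        rw [h1, h2, neg_pow]
        ring





lemma T_eval (ℓ s n : ℕ) (hs : s ≤ ℓ) (hn : n ≤ ℓ) :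
    ∑ j ∈ Finset.range (ℓ + 1), (-1 : ℝ) ^ j * (ℓ.choose j : ℝ) * (j : ℝ) ^ n *
        (∑ k ∈ Finset.range (s + 1), (-1 : ℝ) ^ k * tau ℓ (s - k) * (j : ℝ) ^ k)
      = if n = ℓ - s then (-1 : ℝ) ^ (ℓ - s) * (ℓ.factorial : ℝ) else 0 := by
  rcases lt_or_ge n (ℓ - s) with hlt | hge
  · -- low degree case
    rw [if_neg (by omega)]
    set f : Polynomial ℝ :=
      ∑ k ∈ Finset.range (s + 1), Polynomial.C ((-1 : ℝ) ^ k * tau ℓ (s - k)) * Polynomial.X ^ (k + n)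
      with hf
    have hev : ∀ j : ℕ, f.eval (j : ℝ)
        = (j : ℝ) ^ n * ∑ k ∈ Finset.range (s + 1), (-1 : ℝ) ^ k * tau ℓ (s - k) * (j : ℝ) ^ k := by
      intro j
      rw [hf, Polynomial.eval_finset_sum, Finset.mul_sum]
      apply Finset.sum_congr rfl
      intro k _
      simp [pow_add]
      ring
    have hdeg : f.degree < (ℓ : ℕ) := by
      rw [hf]
      apply lt_of_le_of_lt (Polynomial.degree_sum_le _ _)
      rw [Finset.sup_lt_iff (by exact_mod_cast WithBot.bot_lt_coe ℓ)]
      intro k hk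
      apply lt_of_le_of_lt (Polynomial.degree_C_mul_X_pow_le _ _)
      have : k + n < ℓ := by
        have := Finset.mem_range.mp hk
        omega
      exact_mod_cast this
    calc ∑ j ∈ Finset.range (ℓ + 1), (-1 : ℝ) ^ j * (ℓ.choose j : ℝ) * (j : ℝ) ^ n *
            (∑ k ∈ Finset.range (s + 1), (-1 : ℝ) ^ k * tau ℓ (s - k) * (j : ℝ) ^ k)
        = ∑ j ∈ Finset.range (ℓ + 1), (-1 : ℝ) ^ j * (ℓ.choose j : ℝ) * f.eval (j : ℝ) := by
          apply Finset.sum_congr rfl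
          intro j _
          rw [hev j]
          ring
      _ = 0 := alt_sum_eval_eq_zero ℓ f hdeg
  · -- high degree case
    set d := n - (ℓ - s) with hd
    have hdn : d + (ℓ - s) = n := by omega
    -- pointwise rewrite of the summand
    have hpoint : ∀ j : ℕ,
        (-1 : ℝ) ^ j * (ℓ.choose j : ℝ) * (j : ℝ) ^ n *
            (∑ k ∈ Finset.range (s + 1), (-1 : ℝ) ^ k * tau ℓ (s - k) * (j : ℝ) ^ k)
          = (-1 : ℝ) ^ (ℓ - s) *
              ((-1 : ℝ) ^ j * (ℓ.choose j : ℝ) *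
                  ((j : ℝ) ^ d * ∏ i ∈ Finset.Icc 1 ℓ, ((i : ℝ) - (j : ℝ)))
                - (-1 : ℝ) ^ j * (ℓ.choose j : ℝ) *
                  ((j : ℝ) ^ d *
                    ∑ m ∈ Finset.range (ℓ - s), (-1 : ℝ) ^ m * tau ℓ (ℓ - m) * (j : ℝ) ^ m)) := by
      intro j
      have hsplit : ∑ m ∈ Finset.range (ℓ + 1), (-1 : ℝ) ^ m * tau ℓ (ℓ - m) * (j : ℝ) ^ m
          = (∑ m ∈ Finset.range (ℓ - s), (-1 : ℝ) ^ m * tau ℓ (ℓ - m) * (j : ℝ) ^ m)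
            + (-1 : ℝ) ^ (ℓ - s) * (j : ℝ) ^ (ℓ - s) *
              ∑ k ∈ Finset.range (s + 1), (-1 : ℝ) ^ k * tau ℓ (s - k) * (j : ℝ) ^ k := by
        have hrange : ℓ + 1 - (ℓ - s) = s + 1 := by omega
        rw [Finset.range_eq_Ico,
          ← Finset.sum_Ico_consecutive _ (Nat.zero_le (ℓ - s)) (by omega : ℓ - s ≤ ℓ + 1),
          ← Finset.range_eq_Ico, Finset.sum_Ico_eq_sum_range, hrange, Finset.mul_sum]
        congr 1
        apply Finset.sum_congr rfl
        intro k hk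
        have hk' : k ≤ s := by
          have := Finset.mem_range.mp hk
          omega
        have h1 : ℓ - (ℓ - s + k) = s - k := by omega
        rw [h1, pow_add, pow_add]
        ring
      have hP := prod_eq_sum_tau ℓ (j : ℝ)
      rw [hP, hsplit]
      have hsq : (-1 : ℝ) ^ (ℓ - s) * (-1 : ℝ) ^ (ℓ - s) = 1 := by
        rw [← pow_add]
        exact Even.neg_one_pow ⟨ℓ - s, rfl⟩
      have hpow : (j : ℝ) ^ n = (j : ℝ) ^ d * (j : ℝ) ^ (ℓ - s) := by
        rw [← pow_add, hdn]
      rw [hpow]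
      linear_combination (-((-1 : ℝ) ^ j * (ℓ.choose j : ℝ) * (j : ℝ) ^ d * (j : ℝ) ^ (ℓ - s) *
        (∑ k ∈ Finset.range (s + 1), (-1 : ℝ) ^ k * tau ℓ (s - k) * (j : ℝ) ^ k))) * hsq
    rw [Finset.sum_congr rfl (fun j _ => hpoint j), ← Finset.mul_sum, Finset.sum_sub_distrib]
    -- the R part vanishes
    have hR : ∑ j ∈ Finset.range (ℓ + 1), (-1 : ℝ) ^ j * (ℓ.choose j : ℝ) *
          ((j : ℝ) ^ d * ∑ m ∈ Finset.range (ℓ - s), (-1 : ℝ) ^ m * tau ℓ (ℓ - m) * (j : ℝ) ^ m)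
        = 0 := by
      set f : Polynomial ℝ :=
        ∑ m ∈ Finset.range (ℓ - s), Polynomial.C ((-1 : ℝ) ^ m * tau ℓ (ℓ - m)) * Polynomial.X ^ (m + d)
        with hf
      have hev : ∀ j : ℕ, f.eval (j : ℝ)
          = (j : ℝ) ^ d * ∑ m ∈ Finset.range (ℓ - s), (-1 : ℝ) ^ m * tau ℓ (ℓ - m) * (j : ℝ) ^ m := by
        intro j
        rw [hf, Polynomial.eval_finset_sum, Finset.mul_sum]
        apply Finset.sum_congr rfl
        intro m _
        simp [pow_add]
        ring
      have hdeg : f.degree < (ℓ : ℕ) := by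
        rw [hf]
        apply lt_of_le_of_lt (Polynomial.degree_sum_le _ _)
        rw [Finset.sup_lt_iff (by exact_mod_cast WithBot.bot_lt_coe ℓ)]
        intro m hm
        apply lt_of_le_of_lt (Polynomial.degree_C_mul_X_pow_le _ _)
        have : m + d < ℓ := by
          have := Finset.mem_range.mp hm
          omega
        exact_mod_cast this
      calc ∑ j ∈ Finset.range (ℓ + 1), (-1 : ℝ) ^ j * (ℓ.choose j : ℝ) *
              ((j : ℝ) ^ d * ∑ m ∈ Finset.range (ℓ - s), (-1 : ℝ) ^ m * tau ℓ (ℓ - m) * (j : ℝ) ^ m)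
          = ∑ j ∈ Finset.range (ℓ + 1), (-1 : ℝ) ^ j * (ℓ.choose j : ℝ) * f.eval (j : ℝ) := by
            apply Finset.sum_congr rfl
            intro j _
            rw [hev j]
        _ = 0 := alt_sum_eval_eq_zero ℓ f hdeg
    rw [hR, sub_zero]
    -- the P part: only j = 0 survives
    have hP : ∑ j ∈ Finset.range (ℓ + 1), (-1 : ℝ) ^ j * (ℓ.choose j : ℝ) *
          ((j : ℝ) ^ d * ∏ i ∈ Finset.Icc 1 ℓ, ((i : ℝ) - (j : ℝ)))
        = (0 : ℝ) ^ d * (ℓ.factorial : ℝ) := by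
      rw [Finset.sum_eq_single_of_mem 0 (Finset.mem_range.mpr (by omega))]
      · have : ∏ i ∈ Finset.Icc 1 ℓ, ((i : ℝ) - ((0 : ℕ) : ℝ)) = (ℓ.factorial : ℝ) := by
          push_cast
          simp only [sub_zero]
          rw [← Nat.cast_prod]
          congr 1
          rw [← Finset.Ico_add_one_right_eq_Icc]
          exact Finset.prod_Ico_id_eq_factorial ℓ
        rw [this]
        simp
      · intro b hbmem hb
        have hb1 : b ∈ Finset.Icc 1 ℓ := by
          have := Finset.mem_range.mp hbmem
          rw [Finset.mem_Icc]
          omega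
        rw [Finset.prod_eq_zero hb1 (by ring)]
        ring
    rw [hP]
    rcases Nat.eq_zero_or_pos d with hd0 | hd0
    · rw [if_pos (by omega), hd0]
      norm_num
    · rw [if_neg (by omega), zero_pow (by omega)]
      ring


theorem deriv_interpolation_at_zero (ℓ : ℕ) (hℓ : 1 ≤ ℓ) (a : Fin (ℓ + 1) → ℝ)
    (q : Polynomial ℝ) (hdeg : q.degree ≤ ℓ)
    (hq : ∀ i : Fin (ℓ + 1), q.eval ((i : ℕ) : ℝ) = a i)
    (s : ℕ) (hs : s ≤ ℓ) :
    (-1 : ℝ) ^ (ℓ - s) * (ℓ.factorial : ℝ) / ((ℓ - s).factorial : ℝ) *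
        (Polynomial.derivative^[ℓ - s] q).eval 0 =
      ∑ k ∈ Finset.range (s + 1),
        (-1 : ℝ) ^ k * tau ℓ (s - k) *
          ∑ j : Fin (ℓ + 1),
            (-1 : ℝ) ^ (j : ℕ) * (ℓ.choose (j : ℕ) : ℝ) * ((j : ℕ) : ℝ) ^ k * a j := by
  have hnd : q.natDegree < ℓ + 1 :=
    Nat.lt_succ_of_le (Polynomial.natDegree_le_iff_degree_le.mpr hdeg)
  have hLHS : (Polynomial.derivative^[ℓ - s] q).eval 0
      = ((ℓ - s).factorial : ℝ) * q.coeff (ℓ - s) := by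
    rw [← Polynomial.coeff_zero_eq_eval_zero, Polynomial.coeff_iterate_derivative, zero_add,
      Nat.descFactorial_self, nsmul_eq_mul]
  rw [hLHS]
  have hfac : ((ℓ - s).factorial : ℝ) ≠ 0 := Nat.cast_ne_zero.mpr (Nat.factorial_ne_zero _)
  have hL2 : (-1 : ℝ) ^ (ℓ - s) * (ℓ.factorial : ℝ) / ((ℓ - s).factorial : ℝ) *
        (((ℓ - s).factorial : ℝ) * q.coeff (ℓ - s))
      = q.coeff (ℓ - s) * ((-1 : ℝ) ^ (ℓ - s) * (ℓ.factorial : ℝ)) := by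
    field_simp
  rw [hL2]
  have hfin : ∀ k : ℕ,
      (∑ j : Fin (ℓ + 1), (-1 : ℝ) ^ (j : ℕ) * (ℓ.choose (j : ℕ) : ℝ) * ((j : ℕ) : ℝ) ^ k * a j)
        = ∑ j ∈ Finset.range (ℓ + 1),
            (-1 : ℝ) ^ j * (ℓ.choose j : ℝ) * (j : ℝ) ^ k * q.eval (j : ℝ) := by
    intro k
    rw [← Fin.sum_univ_eq_sum_range
        (fun j => (-1 : ℝ) ^ j * (ℓ.choose j : ℝ) * (j : ℝ) ^ k * q.eval (j : ℝ)) (ℓ + 1)]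
    exact Finset.sum_congr rfl (fun j _ => by rw [hq j])
  simp only [hfin]
  have step1 : ∑ k ∈ Finset.range (s + 1), (-1 : ℝ) ^ k * tau ℓ (s - k) *
        ∑ j ∈ Finset.range (ℓ + 1), (-1 : ℝ) ^ j * (ℓ.choose j : ℝ) * (j : ℝ) ^ k * q.eval (j : ℝ)
      = ∑ j ∈ Finset.range (ℓ + 1), (-1 : ℝ) ^ j * (ℓ.choose j : ℝ) * q.eval (j : ℝ) *
          ∑ k ∈ Finset.range (s + 1), (-1 : ℝ) ^ k * tau ℓ (s - k) * (j : ℝ) ^ k := by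
    calc ∑ k ∈ Finset.range (s + 1), (-1 : ℝ) ^ k * tau ℓ (s - k) *
          ∑ j ∈ Finset.range (ℓ + 1), (-1 : ℝ) ^ j * (ℓ.choose j : ℝ) * (j : ℝ) ^ k * q.eval (j : ℝ)
        = ∑ j ∈ Finset.range (ℓ + 1), ∑ k ∈ Finset.range (s + 1), (-1 : ℝ) ^ k * tau ℓ (s - k) *
            ((-1 : ℝ) ^ j * (ℓ.choose j : ℝ) * (j : ℝ) ^ k * q.eval (j : ℝ)) := by
          simp only [Finset.mul_sum]
          exact Finset.sum_comm
      _ = ∑ j ∈ Finset.range (ℓ + 1), (-1 : ℝ) ^ j * (ℓ.choose j : ℝ) * q.eval (j : ℝ) *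
            ∑ k ∈ Finset.range (s + 1), (-1 : ℝ) ^ k * tau ℓ (s - k) * (j : ℝ) ^ k := by
          apply Finset.sum_congr rfl
          intro j _
          rw [Finset.mul_sum]
          apply Finset.sum_congr rfl
          intro k _
          ring
  rw [step1]
  have step2 : ∑ j ∈ Finset.range (ℓ + 1), (-1 : ℝ) ^ j * (ℓ.choose j : ℝ) * q.eval (j : ℝ) *
        ∑ k ∈ Finset.range (s + 1), (-1 : ℝ) ^ k * tau ℓ (s - k) * (j : ℝ) ^ k
      = ∑ n ∈ Finset.range (ℓ + 1), q.coeff n *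
          ∑ j ∈ Finset.range (ℓ + 1), (-1 : ℝ) ^ j * (ℓ.choose j : ℝ) * (j : ℝ) ^ n *
            (∑ k ∈ Finset.range (s + 1), (-1 : ℝ) ^ k * tau ℓ (s - k) * (j : ℝ) ^ k) := by
    calc ∑ j ∈ Finset.range (ℓ + 1), (-1 : ℝ) ^ j * (ℓ.choose j : ℝ) * q.eval (j : ℝ) *
          ∑ k ∈ Finset.range (s + 1), (-1 : ℝ) ^ k * tau ℓ (s - k) * (j : ℝ) ^ k
        = ∑ j ∈ Finset.range (ℓ + 1), ∑ n ∈ Finset.range (ℓ + 1), q.coeff n *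
            ((-1 : ℝ) ^ j * (ℓ.choose j : ℝ) * (j : ℝ) ^ n *
              (∑ k ∈ Finset.range (s + 1), (-1 : ℝ) ^ k * tau ℓ (s - k) * (j : ℝ) ^ k)) := by
          apply Finset.sum_congr rfl
          intro j _
          rw [Polynomial.eval_eq_sum_range' hnd]
          simp only [Finset.sum_mul, Finset.mul_sum]
          rw [Finset.sum_comm]
          apply Finset.sum_congr rfl
          intro n _
          apply Finset.sum_congr rfl
          intro k _
          ring
      _ = ∑ n ∈ Finset.range (ℓ + 1), ∑ j ∈ Finset.range (ℓ + 1), q.coeff n *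
            ((-1 : ℝ) ^ j * (ℓ.choose j : ℝ) * (j : ℝ) ^ n *
              (∑ k ∈ Finset.range (s + 1), (-1 : ℝ) ^ k * tau ℓ (s - k) * (j : ℝ) ^ k)) :=
          Finset.sum_comm
      _ = _ := by
          apply Finset.sum_congr rfl
          intro n _
          rw [← Finset.mul_sum]
  rw [step2]
  have step3 : ∀ n ∈ Finset.range (ℓ + 1), q.coeff n *
        (∑ j ∈ Finset.range (ℓ + 1), (-1 : ℝ) ^ j * (ℓ.choose j : ℝ) * (j : ℝ) ^ n *
          (∑ k ∈ Finset.range (s + 1), (-1 : ℝ) ^ k * tau ℓ (s - k) * (j : ℝ) ^ k))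
      = if n = ℓ - s then q.coeff n * ((-1 : ℝ) ^ (ℓ - s) * (ℓ.factorial : ℝ)) else 0 := by
    intro n hn
    rw [T_eval ℓ s n hs (by have := Finset.mem_range.mp hn; omega)]
    split_ifs with h
    · rfl
    · exact mul_zero _
  rw [Finset.sum_congr rfl step3, Finset.sum_ite_eq' (Finset.range (ℓ + 1)) (ℓ - s)
    (fun n => q.coeff n * ((-1 : ℝ) ^ (ℓ - s) * (ℓ.factorial : ℝ))),
    if_pos (Finset.mem_range.mpr (by omega))]
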